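/- For every integer n ≥ 2, the total domination number of the central graph of the complete graph K_n equals n + ⌈n/2⌉ − 1. -/

import Mathlib

open SimpleGraph

/-- The central graph `C(G)`: subdivide each edge of `G` once (vertex `c_e` for each
edge `e`) and join all non-adjacent pairs of original vertices. -/
def centralGraph {V : Type*} (G : SimpleGraph V) : SimpleGraph (V ⊕ G.edgeSet) where
  Adj x y :=
    match x, y with
    | Sum.inl u, Sum.inl v => u ≠ v ∧ ¬ G.Adj u v
    | Sum.inl u, Sum.inr e => u ∈ (e : Sym2 V)
    | Sum.inr e, Sum.inl u => u ∈ (e : Sym2 V)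
    | Sum.inr _, Sum.inr _ => False
  symm := ⟨by
    rintro (u | e) (v | f) h
    · exact ⟨h.1.symm, fun a => h.2 a.symm⟩
    · exact h
    · exact h
    · exact h⟩
  loopless := ⟨by
    rintro (u | e) h
    · exact h.1 rfl
    · exact h⟩

/-- `f` is a total dominator coloring of `G`: a proper coloring such that every
vertex is adjacent to all vertices of some (nonempty) color class. -/
def IsTDColoring {V : Type*} (G : SimpleGraph V) (f : V → ℕ) : Prop :=
  (∀ u v, G.Adj u v → f u ≠ f v) ∧
  ∀ v, ∃ c, (∃ w, f w = c) ∧ ∀ w, f w = c → G.Adj v w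

/-- Total dominator chromatic number: minimum number of colors in a TDC. -/
noncomputable def tdcn {V : Type*} (G : SimpleGraph V) : ℕ :=
  sInf {k | ∃ f : V → ℕ, IsTDColoring G f ∧ ∀ v, f v < k}

/-- Total domination number. -/
noncomputable def tdn {V : Type*} (G : SimpleGraph V) : ℕ :=
  sInf {k | ∃ S : Set V, S.ncard = k ∧ ∀ v, ∃ u ∈ S, G.Adj v u}

/-- The join of two graphs. -/
def joinGraph {α β : Type*} (G : SimpleGraph α) (H : SimpleGraph β) :
    SimpleGraph (α ⊕ β) where
  Adj x y :=
    match x, y with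
    | Sum.inl u, Sum.inl v => G.Adj u v
    | Sum.inr u, Sum.inr v => H.Adj u v
    | Sum.inl _, Sum.inr _ => True
    | Sum.inr _, Sum.inl _ => True
  symm := ⟨by rintro (u | u) (v | v) h <;> first | exact h.symm | trivial⟩
  loopless := ⟨by rintro (u | u) h <;> exact h.ne rfl⟩

/-- The path graph on `n` vertices. -/
def pathG (n : ℕ) : SimpleGraph (Fin n) :=
  SimpleGraph.fromRel (fun i j => (i : ℕ) + 1 = (j : ℕ))

/-- The cycle graph on `n` vertices. -/
def cycleG (n : ℕ) : SimpleGraph (ZMod n) :=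
  SimpleGraph.fromRel (fun i j => i - j = 1)

/-- The double star `S_{1,n,n}`: center `0`, support vertices `1,...,n`
(adjacent to the center), each `i` with its own pendant `n+i`. -/
def doubleStar (n : ℕ) : SimpleGraph (Fin (2 * n + 1)) :=
  SimpleGraph.fromRel (fun a b =>
    ((a : ℕ) = 0 ∧ 1 ≤ (b : ℕ) ∧ (b : ℕ) ≤ n) ∨
    (1 ≤ (a : ℕ) ∧ (a : ℕ) ≤ n ∧ (b : ℕ) = (a : ℕ) + n))

/-- The disjoint union of a family of graphs. -/
def sigmaGraph {ι : Type*} {V : ι → Type*} (G : ∀ i, SimpleGraph (V i)) :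
    SimpleGraph (Σ i, V i) :=
  SimpleGraph.fromRel (fun x y =>
    ∃ (i : ι) (u v : V i), (G i).Adj u v ∧ x = ⟨i, u⟩ ∧ y = ⟨i, v⟩)

private def pf (n : ℕ) (hn : 2 ≤ n) (k : ℕ) : Fin n × Fin n :=
  if h : 2*k+1 < n then (⟨2*k, by omega⟩, ⟨2*k+1, h⟩)
  else (⟨n-2, by omega⟩, ⟨n-1, by omega⟩)

private lemma pf_ne {n : ℕ} (hn : 2 ≤ n) (k : ℕ) : (pf n hn k).1 ≠ (pf n hn k).2 := by
  unfold pf; split <;> simp [Fin.ext_iff] <;> omega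

private def gfun {n : ℕ} (hn : 2 ≤ n) :
    (Fin (n-1) ⊕ Fin ((n+1)/2)) → (Fin n ⊕ (⊤ : SimpleGraph (Fin n)).edgeSet)
  | Sum.inl i => Sum.inl (Fin.castLE (by omega) i)
  | Sum.inr k => Sum.inr ⟨s((pf n hn k.val).1, (pf n hn k.val).2), by
      rw [SimpleGraph.mem_edgeSet, SimpleGraph.top_adj]; exact pf_ne hn k.val⟩

private lemma gfun_inj {n : ℕ} (hn : 2 ≤ n) : Function.Injective (gfun hn) := by
  rintro (i | k) (j | l) h <;> simp only [gfun, Sum.inl.injEq, Sum.inr.injEq,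
    reduceCtorEq, Subtype.mk.injEq] at h
  · exact congrArg Sum.inl (by ext; simpa [Fin.ext_iff] using congrArg Fin.val h)
  · rw [Sym2.eq_iff] at h
    have hk := k.2; have hl := l.2
    unfold pf at h
    refine congrArg Sum.inr (Fin.ext ?_)
    split_ifs at h <;> simp [Fin.ext_iff] at h <;> omega

theorem tdn_central_complete (n : ℕ) (hn : 2 ≤ n) :
    tdn (centralGraph (⊤ : SimpleGraph (Fin n))) = n + (n + 1) / 2 - 1 := by
  classical
  have hmem : n + (n + 1) / 2 - 1 ∈ {k | ∃ S : Set (Fin n ⊕ (⊤ : SimpleGraph (Fin n)).edgeSet),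
      S.ncard = k ∧ ∀ v, ∃ u ∈ S, (centralGraph (⊤ : SimpleGraph (Fin n))).Adj v u} := by
    refine ⟨Set.range (gfun hn), ?_, ?_⟩
    · rw [← Nat.card_coe_set_eq, Nat.card_eq_fintype_card,
        Set.card_range_of_injective (gfun_inj hn), Fintype.card_sum,
        Fintype.card_fin, Fintype.card_fin]
      omega
    · rintro (i | ⟨e, he⟩)
      · refine ⟨gfun hn (Sum.inr ⟨i.val / 2, by have := i.2; omega⟩), Set.mem_range_self _, ?_⟩
        show (i : Fin n) ∈ (s((pf n hn (i.val/2)).1, (pf n hn (i.val/2)).2) : Sym2 (Fin n))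
        rw [Sym2.mem_iff]
        have hi := i.2
        unfold pf
        split_ifs with h <;> simp [Fin.ext_iff] <;> omega
      · revert he
        induction e using Sym2.ind with
        | _ a b =>
          intro he
          have hab : a ≠ b := by rwa [SimpleGraph.mem_edgeSet, SimpleGraph.top_adj] at he
          have hab' : a.val ≠ b.val := fun hc => hab (Fin.ext hc)
          by_cases ha : a.val < n - 1
          · refine ⟨gfun hn (Sum.inl ⟨a.val, ha⟩), Set.mem_range_self _, ?_⟩
            show (Fin.castLE _ _ : Fin n) ∈ (s(a, b) : Sym2 (Fin n))
            rw [Sym2.mem_iff]; left; ext; rfl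
          · have hb : b.val < n - 1 := by have := a.2; have := b.2; omega
            refine ⟨gfun hn (Sum.inl ⟨b.val, hb⟩), Set.mem_range_self _, ?_⟩
            show (Fin.castLE _ _ : Fin n) ∈ (s(a, b) : Sym2 (Fin n))
            rw [Sym2.mem_iff]; right; ext; rfl
  have hlow : ∀ k ∈ {k | ∃ S : Set (Fin n ⊕ (⊤ : SimpleGraph (Fin n)).edgeSet),
      S.ncard = k ∧ ∀ v, ∃ u ∈ S, (centralGraph (⊤ : SimpleGraph (Fin n))).Adj v u},
      n + (n + 1) / 2 - 1 ≤ k := by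
    rintro k ⟨S, hcard, hdom⟩
    set A : Finset (Fin n) := Finset.univ.filter (fun i => Sum.inl i ∈ S) with hA
    set B : Finset ((⊤ : SimpleGraph (Fin n)).edgeSet) :=
      Finset.univ.filter (fun e => Sum.inr e ∈ S) with hB
    have hSfin : S.Finite := Set.toFinite S
    have hT : hSfin.toFinset = A.disjSum B := by
      ext (i | e) <;> simp [hA, hB]
    have hcard' : k = A.card + B.card := by
      rw [← hcard, Set.ncard_eq_toFinset_card S hSfin, hT, Finset.card_disjSum]
    have hAcard : n - 1 ≤ A.card := by
      by_contra hc
      push_neg at hc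
      have hcompl : 1 < Aᶜ.card := by
        rw [Finset.card_compl, Fintype.card_fin]; omega
      obtain ⟨i, hi, j, hj, hij⟩ := Finset.one_lt_card.mp hcompl
      simp only [Finset.mem_compl, hA, Finset.mem_filter, Finset.mem_univ, true_and,
        not_and, not_not] at hi hj
      have he : s(i, j) ∈ (⊤ : SimpleGraph (Fin n)).edgeSet := by
        rw [SimpleGraph.mem_edgeSet, SimpleGraph.top_adj]; exact hij
      obtain ⟨u, huS, hadj⟩ := hdom (Sum.inr ⟨_, he⟩)
      cases u with
      | inl w =>
        have hw : w = i ∨ w = j := Sym2.mem_iff.mp hadj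
        rcases hw with rfl | rfl
        · exact hi huS
        · exact hj huS
      | inr f => exact hadj
    have hch : ∀ i : Fin n, ∃ e ∈ B, i ∈ (e : Sym2 (Fin n)) := by
      intro i
      obtain ⟨u, huS, hadj⟩ := hdom (Sum.inl i)
      cases u with
      | inl w => exact (hadj.2 ((SimpleGraph.top_adj i w).mpr hadj.1)).elim
      | inr e => exact ⟨e, by simp [hB, huS], hadj⟩
    choose f hfB hfmem using hch
    have hBcard : (n + 1) / 2 ≤ B.card := by
      have hcount : (Finset.univ : Finset (Fin n)).card ≤ 2 * B.card := by
        refine Finset.card_le_mul_card_image_of_maps_to (fun a _ => hfB a) 2 ?_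
        rintro ⟨ev, hev⟩ _
        revert hev
        induction ev using Sym2.ind with
        | _ a b =>
          intro hev _
          have hab : a ≠ b := by rwa [SimpleGraph.mem_edgeSet, SimpleGraph.top_adj] at hev
          refine le_trans (Finset.card_le_card (fun x hx => ?_)) (le_of_eq (Finset.card_pair hab))
          simp only [Finset.mem_filter, Finset.mem_univ, true_and] at hx
          have hxm := hfmem x
          rw [hx] at hxm
          have : x = a ∨ x = b := Sym2.mem_iff.mp hxm
          simpa [Finset.mem_insert, Finset.mem_singleton] using this
      rw [Finset.card_univ, Fintype.card_fin] at hcount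
      omega
    omega
  exact le_antisymm (Nat.sInf_le hmem) (le_csInf ⟨_, hmem⟩ hlow)
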